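/- Let f : ℝ^n → ℝ be convex and bounded from below, and let {x_i}_{i≥0} be a proximal sequence for f with parameters {t_i} ⊆ (0,1]. Then the polygonal curve γ : [0, ∞) → ℝ^n defined by γ(i + s) = (1 − s) x_i + s x_{i+1} for i ∈ ℕ and s ∈ [0, 1] is self-contracted. In particular, for all indices i₁ ≤ i₂ ≤ i₃ one has ‖x_{i₂} − x_{i₃}‖ ≤ ‖x_{i₁} − x_{i₃}‖. -/

import Mathlib

open Set Metric

/-- A curve `γ : I → ℝⁿ` is *self-contracted* if for all `t₁ ≤ t₂ ≤ t₃` in `I`,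
`‖γ t₁ - γ t₃‖ ≥ ‖γ t₂ - γ t₃‖`. -/
def SelfContracted {n : ℕ} (I : Set ℝ) (γ : ℝ → EuclideanSpace ℝ (Fin n)) : Prop :=
  ∀ t₁ ∈ I, ∀ t₂ ∈ I, ∀ t₃ ∈ I, t₁ ≤ t₂ → t₂ ≤ t₃ →
    ‖γ t₂ - γ t₃‖ ≤ ‖γ t₁ - γ t₃‖

/-- `x` is a *proximal sequence* for `f` with parameters `t` if for every `i`,
`x (i+1)` minimizes `y ↦ f y + ‖y - x i‖² / (2 t i)`. -/
def IsProximalSeq {n : ℕ} (f : EuclideanSpace ℝ (Fin n) → ℝ) (t : ℕ → ℝ)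
    (x : ℕ → EuclideanSpace ℝ (Fin n)) : Prop :=
  ∀ i, ∀ y, f (x (i + 1)) + ‖x (i + 1) - x i‖ ^ 2 / (2 * t i) ≤
    f y + ‖y - x i‖ ^ 2 / (2 * t i)

/-- The piecewise-linear curve visiting the points `p 0, p 1, p 2, …` in order, with
`p j` reached at time `j` and affine interpolation on `[j, j + 1]`, i.e.
`s ↦ (1 - (s - j)) • p j + (s - j) • p (j+1)` for `s ∈ [j, j+1]`. -/
noncomputable def polygonalCurve {n : ℕ} (p : ℕ → EuclideanSpace ℝ (Fin n)) (s : ℝ) :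
    EuclideanSpace ℝ (Fin n) :=
  (1 - (s - (⌊s⌋₊ : ℝ))) • p ⌊s⌋₊ + (s - (⌊s⌋₊ : ℝ)) • p (⌊s⌋₊ + 1)

/-- Monotonicity of the distance to `z` along a segment, under a quantitative
obtuseness condition. -/
lemma seg_mono_aux {E : Type*} [NormedAddCommGroup E] [InnerProductSpace ℝ E]
    (a b z : E) (s s' : ℝ) (hss' : s ≤ s')
    (h : 2 * inner ℝ (a - z) (b - a) + (s + s') * ‖b - a‖ ^ 2 ≤ (0:ℝ)) :
    ‖(1 - s') • a + s' • b - z‖ ≤ ‖(1 - s) • a + s • b - z‖ := by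
  have e : ∀ u : ℝ, (1 - u) • a + u • b - z = (a - z) + u • (b - a) := by
    intro u
    rw [sub_smul, smul_sub, one_smul]
    abel
  have sq : ∀ u : ℝ, ‖(1 - u) • a + u • b - z‖ ^ 2
      = ‖a - z‖^2 + 2*(u*inner ℝ (a-z) (b-a)) + u^2*‖b-a‖^2 := by
    intro u
    rw [e u, norm_add_sq_real, real_inner_smul_right, norm_smul]
    rw [mul_pow, Real.norm_eq_abs, sq_abs]
  have h2 : ‖(1 - s') • a + s' • b - z‖ ^ 2 ≤ ‖(1 - s) • a + s • b - z‖ ^ 2 := by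
    rw [sq s, sq s']
    nlinarith [sq_nonneg (s' - s)]
  exact (pow_le_pow_iff_left₀ (norm_nonneg _) (norm_nonneg _) two_ne_zero).mp h2

/-- The first-order optimality property of a proximal step: the vector to any point
with smaller `f`-value makes a non-acute angle with the backward step. -/
lemma prox_inner_aux {n : ℕ} {f : EuclideanSpace ℝ (Fin n) → ℝ} (hf : ConvexOn ℝ univ f)
    {t : ℕ → ℝ} {x : ℕ → EuclideanSpace ℝ (Fin n)} (hx : IsProximalSeq f t x)
    (ht : ∀ i, t i ∈ Ioc (0 : ℝ) 1) (i : ℕ) {z : EuclideanSpace ℝ (Fin n)}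
    (hz : f z ≤ f (x (i+1))) :
    (0:ℝ) ≤ inner ℝ (x (i+1) - x i) (z - x (i+1)) := by
  set b := x (i+1) with hb
  set a := x i with ha
  set c : ℝ := inner ℝ (b - a) (z - b) with hc
  set d : ℝ := ‖z - b‖ ^ 2 with hd
  have hd0 : 0 ≤ d := by positivity
  have key : ∀ ε : ℝ, 0 < ε → ε ≤ 1 → 0 ≤ 2*c + ε*d := by
    intro ε hε hε1
    have hy := hx i ((1-ε) • b + ε • z)
    rw [← hb, ← ha] at hy
    have hconv : f ((1-ε) • b + ε • z) ≤ (1-ε) * f b + ε * f z :=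
      hf.2 (mem_univ b) (mem_univ z) (by linarith) (le_of_lt hε) (by ring)
    have hfy : f ((1-ε) • b + ε • z) ≤ f b := by nlinarith
    have ht0 : 0 < t i := (ht i).1
    have h2t : 0 < 2 * t i := by linarith
    have hdiv : ‖b - a‖ ^ 2 / (2 * t i) ≤ ‖(1-ε) • b + ε • z - a‖ ^ 2 / (2 * t i) := by
      linarith
    have hnorm : ‖b - a‖ ^ 2 ≤ ‖(1-ε) • b + ε • z - a‖ ^ 2 :=
      (div_le_div_iff_of_pos_right h2t).mp hdiv
    have expand : ‖(1-ε) • b + ε • z - a‖ ^ 2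
        = ‖b - a‖^2 + 2*(ε*c) + ε^2*d := by
      have e : (1-ε) • b + ε • z - a = (b - a) + ε • (z - b) := by
        rw [sub_smul, smul_sub, one_smul]
        abel
      rw [e, norm_add_sq_real, real_inner_smul_right, norm_smul, mul_pow,
        Real.norm_eq_abs, sq_abs, hc, hd]
    nlinarith [hnorm, expand, sq_nonneg ε]
  have h0c : 0 ≤ c := by
    by_contra hcon
    push_neg at hcon
    have hdpos : 0 < d := by
      rcases lt_or_eq_of_le hd0 with h | h
      · exact h
      · have := key 1 one_pos le_rfl; nlinarith
    set ε := min 1 (-(2*c)/(2*d)) with hε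
    have hεpos : 0 < ε := lt_min one_pos (div_pos (by linarith) (by linarith))
    have hε1 : ε ≤ 1 := min_le_left _ _
    have hεle : ε ≤ -(2*c)/(2*d) := min_le_right _ _
    have hmul : ε * d ≤ (-(2*c)/(2*d)) * d :=
      mul_le_mul_of_nonneg_right hεle hd0
    have heq : (-(2*c)/(2*d)) * d = -c := by
      field_simp
    nlinarith [key ε hεpos hε1]
  exact h0c

/-- The polygonal curve `γ : [0, ∞) → ℝⁿ`, `γ (i + s) = (1 - s) • x i + s • x (i+1)`,
generated by a proximal sequence of a convex function bounded from below is
self-contracted; in particular `‖x i₂ - x i₃‖ ≤ ‖x i₁ - x i₃‖` for `i₁ ≤ i₂ ≤ i₃`. -/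
theorem proximal_polygonal_selfContracted {n : ℕ}
    (f : EuclideanSpace ℝ (Fin n) → ℝ) (hf : ConvexOn ℝ univ f)
    (hbd : BddBelow (range f))
    (t : ℕ → ℝ) (ht : ∀ i, t i ∈ Ioc (0 : ℝ) 1)
    (x : ℕ → EuclideanSpace ℝ (Fin n)) (hx : IsProximalSeq f t x) :
    SelfContracted (Ici 0) (polygonalCurve x) ∧
    ∀ i₁ i₂ i₃ : ℕ, i₁ ≤ i₂ → i₂ ≤ i₃ → ‖x i₂ - x i₃‖ ≤ ‖x i₁ - x i₃‖ := by
  have hdec : ∀ i, f (x (i+1)) ≤ f (x i) := by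
    intro i
    have h := hx i (x i)
    have ht0 : 0 < t i := (ht i).1
    have h1 : ‖x i - x i‖ ^ 2 / (2 * t i) = 0 := by simp
    have h2 : 0 ≤ ‖x (i+1) - x i‖ ^ 2 / (2 * t i) := by positivity
    linarith
  have hanti : ∀ i j : ℕ, i ≤ j → f (x j) ≤ f (x i) := by
    have h := antitone_nat_of_succ_le (f := fun m => f (x m)) hdec
    intro i j hij
    exact h hij
  have hγ : ∀ (j : ℕ) (s : ℝ), (j:ℝ) ≤ s → s ≤ (j:ℝ)+1 →
      polygonalCurve x s = (1 - (s - (j:ℝ))) • x j + (s - (j:ℝ)) • x (j+1) := by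
    intro j s hjs hsj
    rcases lt_or_eq_of_le hsj with h | h
    · have hfl : ⌊s⌋₊ = j := by
        rw [Nat.floor_eq_iff (le_trans (Nat.cast_nonneg j) hjs)]
        exact ⟨hjs, by exact_mod_cast h⟩
      simp [polygonalCurve, hfl]
    · rw [h]
      have hfl : ⌊(j:ℝ)+1⌋₊ = j+1 := by
        rw [show ((j:ℝ)+1) = ((j+1:ℕ):ℝ) by push_cast; ring, Nat.floor_natCast]
      simp only [polygonalCurve, hfl]
      push_cast
      simp
  have key : ∀ T : ℝ, 0 ≤ T → ∀ a b : ℝ, 0 ≤ a → a ≤ b → b ≤ T →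
      ‖polygonalCurve x b - polygonalCurve x T‖ ≤ ‖polygonalCurve x a - polygonalCurve x T‖ := by
    intro T hT
    set z := polygonalCurve x T with hzd
    set k := ⌊T⌋₊ with hk
    set r := T - (k:ℝ) with hr
    have hr0 : 0 ≤ r := by
      have := Nat.floor_le hT
      rw [hr]; linarith
    have hr1 : r < 1 := by
      have := Nat.lt_floor_add_one T
      rw [hr]; linarith
    have hzdef : z = (1 - r) • x k + r • x (k+1) := rfl
    have hfz : f z ≤ f (x k) := by
      rw [hzdef]
      have hcv := hf.2 (mem_univ (x k)) (mem_univ (x (k+1)))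
        (show (0:ℝ) ≤ 1 - r by linarith) hr0 (by ring)
      simp only [smul_eq_mul] at hcv
      have h2 : f (x (k+1)) ≤ f (x k) := hdec k
      nlinarith
    have seg : ∀ (j : ℕ) (a b : ℝ), (j:ℝ) ≤ a → a ≤ b → b ≤ (j:ℝ)+1 → b ≤ T →
        ‖polygonalCurve x b - z‖ ≤ ‖polygonalCurve x a - z‖ := by
      intro j a b hja hab hbj hbT
      have hjk : j ≤ k := by
        apply Nat.le_floor
        calc (j:ℝ) ≤ b := le_trans hja hab
          _ ≤ T := hbT
      have haj : a ≤ (j:ℝ)+1 := le_trans hab hbj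
      rw [hγ j a hja haj, hγ j b (le_trans hja hab) hbj]
      rcases lt_or_eq_of_le hjk with hlt | heq
      · -- segment strictly before the one containing T
        have hk1 : j+1 ≤ k := hlt
        have hfz' : f z ≤ f (x (j+1)) := le_trans hfz (hanti (j+1) k hk1)
        have hip := prox_inner_aux hf hx ht j hfz'
        apply seg_mono_aux _ _ _ _ _ (by linarith)
        have e1 : x j - z = -(x (j+1) - x j) + (x (j+1) - z) := by abel
        have e3 : x (j+1) - z = -(z - x (j+1)) := by abel
        have e2 : (inner ℝ (x j - z) (x (j+1) - x j) : ℝ)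
            = -‖x (j+1) - x j‖^2 - inner ℝ (x (j+1) - x j) (z - x (j+1)) := by
          rw [e1, inner_add_left, inner_neg_left, real_inner_self_eq_norm_sq,
            e3, inner_neg_left, real_inner_comm]
          ring
        rw [e2]
        nlinarith [hip, sq_nonneg ‖x (j+1) - x j‖]
      · -- same segment as T
        subst heq
        have hbr : b - (k:ℝ) ≤ r := by rw [hr]; linarith
        apply seg_mono_aux _ _ _ _ _ (by linarith)
        have e1 : x k - z = -(r • (x (k+1) - x k)) := by
          rw [hzdef, sub_smul, one_smul, smul_sub]
          abel
        have e2 : (inner ℝ (x k - z) (x (k+1) - x k) : ℝ) = -(r * ‖x (k+1) - x k‖^2) := by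
          rw [e1, inner_neg_left, real_inner_smul_left, real_inner_self_eq_norm_sq]
        rw [e2]
        nlinarith [sq_nonneg ‖x (k+1) - x k‖]
    have chain : ∀ d : ℕ, ∀ a b : ℝ, 0 ≤ a → a ≤ b → b ≤ T → ⌊b⌋₊ ≤ ⌊a⌋₊ + d →
        ‖polygonalCurve x b - z‖ ≤ ‖polygonalCurve x a - z‖ := by
      intro d
      induction d with
      | zero =>
        intro a b ha hab hbT hfl
        have h1 : ⌊a⌋₊ ≤ ⌊b⌋₊ := Nat.floor_le_floor hab
        have h2 : ⌊a⌋₊ = ⌊b⌋₊ := le_antisymm h1 (by omega)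
        apply seg ⌊a⌋₊ a b (Nat.floor_le ha) hab ?_ hbT
        rw [h2]
        linarith [Nat.lt_floor_add_one b]
      | succ d ih =>
        intro a b ha hab hbT hfl
        by_cases hcase : ⌊b⌋₊ ≤ ⌊a⌋₊ + d
        · exact ih a b ha hab hbT hcase
        · push_neg at hcase
          have hlt : ⌊a⌋₊ < ⌊b⌋₊ := by omega
          have hcb : ((⌊a⌋₊:ℝ) + 1) ≤ b := by
            have h2 : ((⌊a⌋₊ + 1 : ℕ):ℝ) ≤ (⌊b⌋₊:ℝ) := by exact_mod_cast hlt
            have h3 : (⌊b⌋₊:ℝ) ≤ b := Nat.floor_le (le_trans ha hab)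
            push_cast at h2
            linarith
          have hac : a ≤ (⌊a⌋₊:ℝ) + 1 := le_of_lt (Nat.lt_floor_add_one a)
          have step1 : ‖polygonalCurve x ((⌊a⌋₊:ℝ)+1) - z‖ ≤ ‖polygonalCurve x a - z‖ :=
            seg ⌊a⌋₊ a ((⌊a⌋₊:ℝ)+1) (Nat.floor_le ha) hac le_rfl (le_trans hcb hbT)
          have hflc : ⌊(⌊a⌋₊:ℝ)+1⌋₊ = ⌊a⌋₊ + 1 := by
            rw [show ((⌊a⌋₊:ℝ) + 1) = ((⌊a⌋₊ + 1 : ℕ):ℝ) by push_cast; ring,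
              Nat.floor_natCast]
          have step2 : ‖polygonalCurve x b - z‖ ≤ ‖polygonalCurve x ((⌊a⌋₊:ℝ)+1) - z‖ :=
            ih ((⌊a⌋₊:ℝ)+1) b (by positivity) hcb hbT (by omega)
          exact le_trans step2 step1
    intro a b ha hab hbT
    exact chain ⌊b⌋₊ a b ha hab hbT (by omega)
  constructor
  · intro t₁ h₁ t₂ h₂ t₃ h₃ h12 h23
    exact key t₃ h₃ t₁ t₂ h₁ h12 h23
  · intro i₁ i₂ i₃ h12 h23
    have hn : ∀ m : ℕ, polygonalCurve x (m:ℝ) = x m := by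
      intro m
      rw [hγ m (m:ℝ) le_rfl (by linarith)]
      simp
    have h := key (i₃:ℝ) (Nat.cast_nonneg _) (i₁:ℝ) (i₂:ℝ) (Nat.cast_nonneg _)
      (by exact_mod_cast h12) (by exact_mod_cast h23)
    rw [hn i₁, hn i₂, hn i₃] at h
    exact h
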